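/- Let J, M be symmetric real 3×3 matrices, D a real 3×3 matrix, m, g, l, α, β ∈ ℝ, χ, Γₑ ∈ ℝ³, v_d ∈ ℝ³. Let Ω, v, Γ, Θ : I → ℝ³ be differentiable curves on a real interval I with Π := JΩ + Dv, P := DᵀΩ + Mv, satisfying the controlled underwater-vehicle system Π' = Π × Ω + P × v − m g l χ × Γ + u₁, P' = P × Ω, Γ' = Γ × Ω, Θ' = Θ × Ω, with control u₁(t) = m g l (χ + β Γₑ) × Γ(t) + Θ(t) × (‖v_d‖ (M − αI) v_d). Then the controlled energy E(t) := ½(Π(t)·Ω(t) + P(t)·v(t)) + m g l χ·Γ(t) − m g l (χ + β Γₑ)·Γ(t) + ‖v_d‖ ((M − αI) v_d)·Θ(t) is constant on I. -/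

import Mathlib

open Matrix

/-- The Euclidean norm on ℝ³ (as `Fin 3 → ℝ`). -/
noncomputable def eNorm (v : Fin 3 → ℝ) : ℝ := Real.sqrt (v ⬝ᵥ v)

private lemma hasDerivAt_dot {f g f' g' : ℝ → Fin 3 → ℝ} {t : ℝ}
    (hf : HasDerivAt f (f' t) t) (hg : HasDerivAt g (g' t) t) :
    HasDerivAt (fun s => f s ⬝ᵥ g s) (f' t ⬝ᵥ g t + f t ⬝ᵥ g' t) t := by
  simp only [dotProduct]
  rw [← Finset.sum_add_distrib]
  exact HasDerivAt.fun_sum fun i _ =>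
    ((hasDerivAt_pi.1 hf i).mul (hasDerivAt_pi.1 hg i))

private lemma hasDerivAt_mulVec (A : Matrix (Fin 3) (Fin 3) ℝ)
    {f f' : ℝ → Fin 3 → ℝ} {t : ℝ} (hf : HasDerivAt f (f' t) t) :
    HasDerivAt (fun s => A *ᵥ f s) (A *ᵥ f' t) t := by
  rw [hasDerivAt_pi]
  intro i
  simp only [mulVec]
  have := hasDerivAt_dot (f := fun _ => A i) (f' := fun _ => (0 : Fin 3 → ℝ))
    (hasDerivAt_const t (A i)) hf
  simpa using this

private lemma hasDerivAt_dot_const {g g' : ℝ → Fin 3 → ℝ} {t : ℝ} (c : Fin 3 → ℝ)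
    (hg : HasDerivAt g (g' t) t) :
    HasDerivAt (fun s => c ⬝ᵥ g s) (c ⬝ᵥ g' t) t := by
  have := hasDerivAt_dot (f := fun _ => c) (f' := fun _ => (0 : Fin 3 → ℝ))
    (hasDerivAt_const t c) hg
  simpa using this

private lemma dot_transpose (A : Matrix (Fin 3) (Fin 3) ℝ)
    (x y : Fin 3 → ℝ) : x ⬝ᵥ (A *ᵥ y) = y ⬝ᵥ (Aᵀ *ᵥ x) := by
  simp only [dotProduct, Matrix.mulVec, Matrix.transpose_apply, dotProduct,
    Fin.sum_univ_three]
  ring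

private lemma symm_dot {A : Matrix (Fin 3) (Fin 3) ℝ} (hA : A.IsSymm)
    (x y : Fin 3 → ℝ) : x ⬝ᵥ (A *ᵥ y) = y ⬝ᵥ (A *ᵥ x) := by
  rw [dot_transpose, hA]

/-- Along solutions of the controlled underwater-vehicle system with the steady-motion
control u₁ = m g l (χ + β Γₑ) × Γ + Θ × (‖v_d‖ (M − αI) v_d) (and u₂ = 0), the controlled
energy E = ½(Π·Ω + P·v) + m g l χ·Γ − m g l (χ + β Γₑ)·Γ + ‖v_d‖ ((M − αI) v_d)·Θ
is constant. -/
theorem underwater_vehicle_controlled_energy_conserved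
    (I : Set ℝ) (hI : I.OrdConnected)
    (J D M : Matrix (Fin 3) (Fin 3) ℝ) (hJ : J.IsSymm) (hM : M.IsSymm)
    (m g l α β : ℝ) (χ Γe vd : Fin 3 → ℝ)
    (Ω v Γ Θ : ℝ → Fin 3 → ℝ)
    -- Ω, v, Γ, Θ are differentiable, with derivatives dΩ, dv of Ω, v
    (dΩ dv : ℝ → Fin 3 → ℝ)
    (hΩ : ∀ t ∈ I, HasDerivAt Ω (dΩ t) t) (hv : ∀ t ∈ I, HasDerivAt v (dv t) t)
    -- the momenta Π = JΩ + Dv and P = DᵀΩ + Mv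
    (Pang P : ℝ → Fin 3 → ℝ)
    (hPangdef : ∀ t, Pang t = J *ᵥ Ω t + D *ᵥ v t)
    (hPdef : ∀ t, P t = Dᵀ *ᵥ Ω t + M *ᵥ v t)
    -- the control u₁
    (u₁ : ℝ → Fin 3 → ℝ)
    (hu₁ : ∀ t ∈ I, u₁ t = (m * g * l) • ((χ + β • Γe) ⨯₃ Γ t)
      + Θ t ⨯₃ (eNorm vd • ((M - α • (1 : Matrix (Fin 3) (Fin 3) ℝ)) *ᵥ vd)))
    -- the controlled underwater-vehicle equations
    (hPang : ∀ t ∈ I,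
      J *ᵥ dΩ t + D *ᵥ dv t
        = Pang t ⨯₃ Ω t + P t ⨯₃ v t - (m * g * l) • (χ ⨯₃ Γ t) + u₁ t)
    (hP : ∀ t ∈ I, Dᵀ *ᵥ dΩ t + M *ᵥ dv t = P t ⨯₃ Ω t)
    (hΓ : ∀ t ∈ I, HasDerivAt Γ (Γ t ⨯₃ Ω t) t)
    (hΘ : ∀ t ∈ I, HasDerivAt Θ (Θ t ⨯₃ Ω t) t)
    -- the controlled energy
    (E : ℝ → ℝ)
    (hE : ∀ t, E t = (1 / 2) * (Pang t ⬝ᵥ Ω t + P t ⬝ᵥ v t)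
      + m * g * l * (χ ⬝ᵥ Γ t) - m * g * l * ((χ + β • Γe) ⬝ᵥ Γ t)
      + eNorm vd * (((M - α • (1 : Matrix (Fin 3) (Fin 3) ℝ)) *ᵥ vd) ⬝ᵥ Θ t)) :
    -- E is constant on I
    ∀ s ∈ I, ∀ t ∈ I, E s = E t := by
  set c : ℝ := eNorm vd with hc
  set w : Fin 3 → ℝ := (M - α • (1 : Matrix (Fin 3) (Fin 3) ℝ)) *ᵥ vd with hw
  have key : ∀ x ∈ I, HasDerivAt E 0 x := by
    intro x hx
    have hΩx := hΩ x hx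
    have hvx := hv x hx
    have hΓx := hΓ x hx
    have hΘx := hΘ x hx
    -- derivative of Pang and P
    have hPangd : HasDerivAt Pang (J *ᵥ dΩ x + D *ᵥ dv x) x := by
      have : HasDerivAt (fun s => J *ᵥ Ω s + D *ᵥ v s) (J *ᵥ dΩ x + D *ᵥ dv x) x :=
        (hasDerivAt_mulVec J hΩx).add (hasDerivAt_mulVec D hvx)
      exact this.congr_of_eventuallyEq
        (Filter.Eventually.of_forall fun s => hPangdef s)
    have hPd : HasDerivAt P (Dᵀ *ᵥ dΩ x + M *ᵥ dv x) x := by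
      have : HasDerivAt (fun s => Dᵀ *ᵥ Ω s + M *ᵥ v s) (Dᵀ *ᵥ dΩ x + M *ᵥ dv x) x :=
        (hasDerivAt_mulVec Dᵀ hΩx).add (hasDerivAt_mulVec M hvx)
      exact this.congr_of_eventuallyEq
        (Filter.Eventually.of_forall fun s => hPdef s)
    -- derivative of E as an explicit expression
    set e' : ℝ :=
      (1 / 2) * (((J *ᵥ dΩ x + D *ᵥ dv x) ⬝ᵥ Ω x + Pang x ⬝ᵥ dΩ x)
        + ((Dᵀ *ᵥ dΩ x + M *ᵥ dv x) ⬝ᵥ v x + P x ⬝ᵥ dv x))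
      + m * g * l * (χ ⬝ᵥ (Γ x ⨯₃ Ω x))
      - m * g * l * ((χ + β • Γe) ⬝ᵥ (Γ x ⨯₃ Ω x))
      + c * (w ⬝ᵥ (Θ x ⨯₃ Ω x)) with he'
    have hEd : HasDerivAt E e' x := by
      have h1 : HasDerivAt (fun s => Pang s ⬝ᵥ Ω s)
          ((J *ᵥ dΩ x + D *ᵥ dv x) ⬝ᵥ Ω x + Pang x ⬝ᵥ dΩ x) x :=
        hasDerivAt_dot (f' := fun s => J *ᵥ dΩ s + D *ᵥ dv s) (g' := dΩ) hPangd hΩx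
      have h2 : HasDerivAt (fun s => P s ⬝ᵥ v s)
          ((Dᵀ *ᵥ dΩ x + M *ᵥ dv x) ⬝ᵥ v x + P x ⬝ᵥ dv x) x :=
        hasDerivAt_dot (f' := fun s => Dᵀ *ᵥ dΩ s + M *ᵥ dv s) (g' := dv) hPd hvx
      have h3 : HasDerivAt (fun s => χ ⬝ᵥ Γ s) (χ ⬝ᵥ (Γ x ⨯₃ Ω x)) x :=
        hasDerivAt_dot_const (g' := fun s => Γ s ⨯₃ Ω s) χ hΓx
      have h4 : HasDerivAt (fun s => (χ + β • Γe) ⬝ᵥ Γ s)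
          ((χ + β • Γe) ⬝ᵥ (Γ x ⨯₃ Ω x)) x :=
        hasDerivAt_dot_const (g' := fun s => Γ s ⨯₃ Ω s) (χ + β • Γe) hΓx
      have h5 : HasDerivAt (fun s => w ⬝ᵥ Θ s) (w ⬝ᵥ (Θ x ⨯₃ Ω x)) x :=
        hasDerivAt_dot_const (g' := fun s => Θ s ⨯₃ Ω s) w hΘx
      have hF : HasDerivAt (fun s => (1 / 2) * (Pang s ⬝ᵥ Ω s + P s ⬝ᵥ v s)
          + m * g * l * (χ ⬝ᵥ Γ s) - m * g * l * ((χ + β • Γe) ⬝ᵥ Γ s)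
          + c * (w ⬝ᵥ Θ s)) e' x := by
        rw [he']
        exact ((((h1.add h2).const_mul (1/2)).add (h3.const_mul (m*g*l))).sub
          (h4.const_mul (m*g*l))).add (h5.const_mul c)
      exact hF.congr_of_eventuallyEq (Filter.Eventually.of_forall fun s => hE s)
    -- the derivative is zero
    have he0 : e' = 0 := by
      have step : e' = Ω x ⬝ᵥ (J *ᵥ dΩ x + D *ᵥ dv x)
          + v x ⬝ᵥ (Dᵀ *ᵥ dΩ x + M *ᵥ dv x)
          + m * g * l * (χ ⬝ᵥ (Γ x ⨯₃ Ω x))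
          - m * g * l * ((χ + β • Γe) ⬝ᵥ (Γ x ⨯₃ Ω x))
          + c * (w ⬝ᵥ (Θ x ⨯₃ Ω x)) := by
        have hA1 : (J *ᵥ Ω x) ⬝ᵥ dΩ x = Ω x ⬝ᵥ (J *ᵥ dΩ x) := by
          rw [dotProduct_comm, symm_dot hJ]
        have hA2 : (D *ᵥ v x) ⬝ᵥ dΩ x = v x ⬝ᵥ (Dᵀ *ᵥ dΩ x) := by
          rw [dotProduct_comm, dot_transpose]
        have hA3 : (Dᵀ *ᵥ Ω x) ⬝ᵥ dv x = Ω x ⬝ᵥ (D *ᵥ dv x) := by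
          rw [dotProduct_comm, dot_transpose, Matrix.transpose_transpose]
        have hA4 : (M *ᵥ v x) ⬝ᵥ dv x = v x ⬝ᵥ (M *ᵥ dv x) := by
          rw [dotProduct_comm, symm_dot hM]
        rw [he', hPangdef x, hPdef x]
        simp only [add_dotProduct, dotProduct_add]
        rw [hA1, hA2, hA3, hA4, dotProduct_comm (J *ᵥ dΩ x) (Ω x),
          dotProduct_comm (D *ᵥ dv x) (Ω x), dotProduct_comm (Dᵀ *ᵥ dΩ x) (v x),
          dotProduct_comm (M *ᵥ dv x) (v x)]
        ring
      rw [step, hPang x hx, hP x hx, hu₁ x hx]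
      simp only [cross_apply, dotProduct, Fin.sum_univ_three, Pi.add_apply,
        Pi.sub_apply, Pi.smul_apply, smul_eq_mul, Matrix.cons_val_zero,
        Matrix.cons_val_one, Matrix.head_cons, Matrix.cons_val_two, Matrix.tail_cons]
      ring
    rw [← he0]
    exact hEd
  intro s hs t ht
  have conv : Convex ℝ I := hI.convex
  have := Convex.norm_image_sub_le_of_norm_hasDerivWithin_le
    (f := E) (f' := fun _ => (0 : ℝ)) (C := 0)
    (fun x hx => (key x hx).hasDerivWithinAt)
    (fun x _ => by simp) conv hs ht
  simp only [norm_zero, zero_mul] at this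
  have : ‖E t - E s‖ ≤ 0 := this
  have := norm_le_zero_iff.1 this
  linarith [sub_eq_zero.1 this]
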